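/- Let l, h > 0 and ψg ∈ ℂ, and set d = 1 + e^{(2+2i)h} - l + e^{(2+2i)h} l. Then d ≠ 0, and the complex numbers A = ψg (l-1)/d, B = -ψg e^{(2+2i)h}(l+1)/d, D = -2 ψg e^{(1+i)h + (1+i)h/l}/d satisfy A + B + ψg = 0, A e^{(1+i)h} + B e^{-(1+i)h} = D e^{-(1+i)h/l}, and A e^{(1+i)h} - B e^{-(1+i)h} = -l D e^{-(1+i)h/l}. -/

import Mathlib

open Complex

theorem one_jump_explicit_coefficients (l h : ℝ) (hl : 0 < l) (hh : 0 < h) (ψg : ℂ)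
    (d A B D : ℂ)
    (hd : d = 1 + Complex.exp ((2 + 2 * Complex.I) * h) - l
        + Complex.exp ((2 + 2 * Complex.I) * h) * l)
    (hA : A = ψg * ((l : ℂ) - 1) / d)
    (hB : B = -(ψg * Complex.exp ((2 + 2 * Complex.I) * h) * ((l : ℂ) + 1)) / d)
    (hD : D = -(2 * ψg * Complex.exp ((1 + Complex.I) * h + (1 + Complex.I) * h / l)) / d) :
    d ≠ 0 ∧
    A + B + ψg = 0 ∧
    A * Complex.exp ((1 + Complex.I) * h) + B * Complex.exp (-(1 + Complex.I) * h)
      = D * Complex.exp (-(1 + Complex.I) * h / l) ∧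
    A * Complex.exp ((1 + Complex.I) * h) - B * Complex.exp (-(1 + Complex.I) * h)
      = -(l : ℂ) * D * Complex.exp (-(1 + Complex.I) * h / l) := by
  have habs : ‖Complex.exp ((2 + 2 * Complex.I) * h)‖ = Real.exp (2 * h) := by
    rw [Complex.norm_exp]
    congr 1
    simp
  have hdne : d ≠ 0 := by
    intro h0
    have heq : Complex.exp ((2 + 2 * Complex.I) * h) * (1 + (l : ℂ)) = (l : ℂ) - 1 := by
      have h1 : d = Complex.exp ((2 + 2 * Complex.I) * h) * (1 + (l : ℂ)) + (1 - (l : ℂ)) := by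
        rw [hd]; ring
      rw [h0] at h1
      linear_combination -h1
    have habs2 := congrArg norm heq
    rw [norm_mul, habs] at habs2
    have h1 : ‖(1 + (l : ℂ))‖ = 1 + l := by
      rw [show (1 + (l : ℂ)) = ((1 + l : ℝ) : ℂ) by push_cast; ring,
        Complex.norm_real, Real.norm_eq_abs, abs_of_pos (by linarith)]
    have h2 : ‖((l : ℂ) - 1)‖ = |l - 1| := by
      rw [show ((l : ℂ) - 1) = ((l - 1 : ℝ) : ℂ) by push_cast; ring, Complex.norm_real, Real.norm_eq_abs]
    rw [h1, h2] at habs2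
    have hexp : 1 < Real.exp (2 * h) := by
      rw [show (1 : ℝ) = Real.exp 0 by simp]
      exact Real.exp_lt_exp.mpr (by linarith)
    have habs3 : |l - 1| < 1 + l := abs_sub_lt_iff.mpr ⟨by linarith, by linarith⟩
    nlinarith [Real.exp_pos (2 * h)]
  set E := Complex.exp ((1 + Complex.I) * h) with hE1
  set E' := Complex.exp (-(1 + Complex.I) * h) with hE2
  set F := Complex.exp ((1 + Complex.I) * h + (1 + Complex.I) * h / l) with hF1
  set G := Complex.exp (-(1 + Complex.I) * h / l) with hG1
  have hE : Complex.exp ((2 + 2 * Complex.I) * h) = E * E := by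
    rw [hE1, ← Complex.exp_add]; ring_nf
  have hEinv : E * E' = 1 := by
    rw [hE1, hE2, ← Complex.exp_add]; ring_nf; exact Complex.exp_zero
  have hDexp : F * G = E := by
    rw [hE1, hF1, hG1, ← Complex.exp_add]; ring_nf
  have hA' : A * d = ψg * ((l : ℂ) - 1) := by
    rw [hA, div_mul_cancel₀ _ hdne]
  have hB' : B * d = -(ψg * Complex.exp ((2 + 2 * Complex.I) * h) * ((l : ℂ) + 1)) := by
    rw [hB, div_mul_cancel₀ _ hdne]
  have hD' : D * d = -(2 * ψg * F) := by
    rw [hD, div_mul_cancel₀ _ hdne]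
  refine ⟨hdne, ?_, ?_, ?_⟩
  · refine mul_right_cancel₀ hdne ?_
    linear_combination hA' + hB' + ψg * hd
  · refine mul_right_cancel₀ hdne ?_
    linear_combination E * hA' + E' * hB' - G * hD' + 2 * ψg * hDexp
      - ψg * ((l : ℂ) + 1) * E' * hE - ψg * ((l : ℂ) + 1) * E * hEinv
  · refine mul_right_cancel₀ hdne ?_
    linear_combination E * hA' - E' * hB' + (l : ℂ) * G * hD' - 2 * (l : ℂ) * ψg * hDexp
      + ψg * ((l : ℂ) + 1) * E' * hE + ψg * ((l : ℂ) + 1) * E * hEinv
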